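/- (Doubling of variables.) Let R > 0, let B̄ be the closed ball of radius R centered at 0 in ℝ^k, let u : B̄ → ℝ be upper semicontinuous and w : B̄ → ℝ be lower semicontinuous, and suppose the maximum of u − w over B̄ is attained at some point x̄ in the open ball. For each ε > 0 let (x_ε, y_ε) ∈ B̄ × B̄ be a maximizer over B̄ × B̄ of Φ_ε(x,y) = u(x) − w(y) − |x − y|²/(2ε). Then |x_ε − y_ε|²/ε stays bounded as ε → 0 and x_ε − y_ε → 0; moreover, along any sequence ε_n → 0 such that (x_{ε_n}, y_{ε_n}) converges, the common limit point x̂ of x_{ε_n} and y_{ε_n} is a maximizer of u − w over B̄, and one has |x_{ε_n} − y_{ε_n}|²/(2ε_n) → 0, u(x_{ε_n}) → u(x̂) and w(y_{ε_n}) → w(x̂). -/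

import Mathlib

open Filter Matrix

noncomputable section

abbrev Vec (n : ℕ) := Fin n → ℝ

/-- Euclidean norm on `Fin n → ℝ`. -/
def eucNorm {n : ℕ} (v : Vec n) : ℝ := Real.sqrt (∑ i, v i ^ 2)

/-- Euclidean inner product. -/
def dotp {n : ℕ} (u v : Vec n) : ℝ := ∑ i, u i * v i

/-- Quadratic form `⟨X v, v⟩`. -/
def quadForm {n : ℕ} (X : Matrix (Fin n) (Fin n) ℝ) (v : Vec n) : ℝ :=
  ∑ i, ∑ j, X i j * v i * v j

/-- Squared Frobenius norm. -/
def frobSq {n p : ℕ} (A : Matrix (Fin n) (Fin p) ℝ) : ℝ := ∑ i, ∑ j, A i j ^ 2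

/-- `(q, X)` belongs to the second-order subjet `J^{2,-} φ (x)`. -/
def InSubjet {n : ℕ} (φ : Vec n → ℝ) (x q : Vec n) (X : Matrix (Fin n) (Fin n) ℝ) : Prop :=
  X.IsSymm ∧ ∀ ε > (0:ℝ), ∀ᶠ y in nhds x,
    φ x + dotp q (y - x) + (1/2) * quadForm X (y - x) - ε * eucNorm (y - x) ^ 2 ≤ φ y

/-- `(q, X)` belongs to the second-order superjet `J^{2,+} φ (x)`. -/
def InSuperjet {n : ℕ} (φ : Vec n → ℝ) (x q : Vec n) (X : Matrix (Fin n) (Fin n) ℝ) : Prop :=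
  X.IsSymm ∧ ∀ ε > (0:ℝ), ∀ᶠ y in nhds x,
    φ y ≤ φ x + dotp q (y - x) + (1/2) * quadForm X (y - x) + ε * eucNorm (y - x) ^ 2

/-- Polynomial growth. -/
def PolyGrowth {n : ℕ} (φ : Vec n → ℝ) : Prop :=
  ∃ (C : ℝ) (γ : ℕ), ∀ x, |φ x| ≤ C * (1 + eucNorm x ^ γ)

/-- The switching obstacle `max_{j ≠ i} (v^j(x) - g_{ij}(x))`. -/
def obstacle {k m : ℕ} (g : Fin m → Fin m → Vec k → ℝ) (v : Fin m → Vec k → ℝ)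
    (i : Fin m) (x : Vec k) : ℝ :=
  ⨆ j : {j : Fin m // j ≠ i}, (v j x - g i j x)

/-- The second order term of the system, evaluated on a jet `(q, X)`. -/
def ham {k d m : ℕ} (r : ℝ) (b : Vec k → Vec k) (σ : Vec k → Matrix (Fin k) (Fin d) ℝ)
    (f : Fin m → Vec k → (Fin m → ℝ) → Vec d → ℝ) (v : Fin m → Vec k → ℝ)
    (i : Fin m) (x q : Vec k) (X : Matrix (Fin k) (Fin k) ℝ) : ℝ :=
  r * v i x - dotp (b x) q - (1/2) * Matrix.trace (σ x * (σ x)ᵀ * X)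
    - f i x (fun j => v j x) ((σ x)ᵀ.mulVec q)

def IsSupersolution {k d m : ℕ} (r : ℝ) (b : Vec k → Vec k)
    (σ : Vec k → Matrix (Fin k) (Fin d) ℝ)
    (f : Fin m → Vec k → (Fin m → ℝ) → Vec d → ℝ)
    (g : Fin m → Fin m → Vec k → ℝ) (v : Fin m → Vec k → ℝ) : Prop :=
  ∀ (i : Fin m) (x q : Vec k) (X : Matrix (Fin k) (Fin k) ℝ), InSubjet (v i) x q X →
    0 ≤ min (v i x - obstacle g v i x) (ham r b σ f v i x q X)

def IsSubsolution {k d m : ℕ} (r : ℝ) (b : Vec k → Vec k)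
    (σ : Vec k → Matrix (Fin k) (Fin d) ℝ)
    (f : Fin m → Vec k → (Fin m → ℝ) → Vec d → ℝ)
    (g : Fin m → Fin m → Vec k → ℝ) (v : Fin m → Vec k → ℝ) : Prop :=
  ∀ (i : Fin m) (x q : Vec k) (X : Matrix (Fin k) (Fin k) ℝ), InSuperjet (v i) x q X →
    min (v i x - obstacle g v i x) (ham r b σ f v i x q X) ≤ 0

/-- Gradient with respect to the standard basis. -/
def grad {k : ℕ} (φ : Vec k → ℝ) (x : Vec k) : Vec k :=
  fun i => fderiv ℝ φ x (Pi.single i 1)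

/-- Hessian matrix with respect to the standard basis. -/
def hess {k : ℕ} (φ : Vec k → ℝ) (x : Vec k) : Matrix (Fin k) (Fin k) ℝ :=
  fun i j => fderiv ℝ (fun y => fderiv ℝ φ y (Pi.single j 1)) x (Pi.single i 1)

/-- The infinitesimal generator `𝓛φ = ½ Tr[σσᵀ D²φ] + b · Dφ`. -/
def genL {k d : ℕ} (b : Vec k → Vec k) (σ : Vec k → Matrix (Fin k) (Fin d) ℝ)
    (φ : Vec k → ℝ) (x : Vec k) : ℝ :=
  (1/2) * Matrix.trace (σ x * (σ x)ᵀ * hess φ x) + dotp (b x) (grad φ x)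

/-- The structural assumptions on the data `b, σ, f, g` that do not involve second
derivatives of the switching costs: Lipschitz continuity and linear growth of the
coefficients, continuity, uniform Lipschitz continuity in `(y,z)` with constant `C`,
polynomial growth and monotonicity of the generators, and nonnegativity, continuity
and polynomial growth of the switching costs. -/
def CoreAssumptions {k d m : ℕ} (b : Vec k → Vec k)
    (σ : Vec k → Matrix (Fin k) (Fin d) ℝ)
    (f : Fin m → Vec k → (Fin m → ℝ) → Vec d → ℝ)
    (g : Fin m → Fin m → Vec k → ℝ) (C : ℝ) : Prop :=
  (∃ Cb : ℝ, ∀ x y : Vec k, eucNorm (b x - b y) ≤ Cb * eucNorm (x - y) ∧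
      Real.sqrt (frobSq (σ x - σ y)) ≤ Cb * eucNorm (x - y)) ∧
  (∃ Cb : ℝ, ∀ x : Vec k, eucNorm (b x) ≤ Cb * (1 + eucNorm x) ∧
      Real.sqrt (frobSq (σ x)) ≤ Cb * (1 + eucNorm x)) ∧
  (∀ i, Continuous fun p : Vec k × (Fin m → ℝ) × Vec d => f i p.1 p.2.1 p.2.2) ∧
  (∀ i (x : Vec k) (y y' : Fin m → ℝ) (z z' : Vec d),
      |f i x y z - f i x y' z'| ≤ C * (eucNorm (y - y') + eucNorm (z - z'))) ∧
  (∀ i, PolyGrowth fun x => f i x 0 0) ∧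
  (∀ i j, j ≠ i → ∀ (x : Vec k) (z : Vec d) (y : Fin m → ℝ) (t t' : ℝ), t ≤ t' →
      f i x (Function.update y j t) z ≤ f i x (Function.update y j t') z) ∧
  (∀ i j x, 0 ≤ g i j x) ∧
  (∀ i x, g i i x = 0) ∧
  (∀ i j, Continuous (g i j)) ∧
  (∀ i j, PolyGrowth (g i j))

/-- The non-free-loop condition on the switching costs. -/
def NonFreeLoop {k m : ℕ} (g : Fin m → Fin m → Vec k → ℝ) : Prop :=
  ∀ (N : ℕ) (ι : ℕ → Fin m), 2 ≤ N → ι 0 ≠ ι 1 → ι 0 = ι (N - 1) →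
    (Finset.image ι (Finset.range N)).card = N - 1 →
    ∀ x : Vec k, 0 < ∑ l ∈ Finset.range (N - 1), g (ι l) (ι (l + 1)) x

/-- The full standing assumptions: the core assumptions, smoothness of the switching
costs with `𝓛 g_{ij} ≤ 0`, and the non-free-loop condition. -/
def DataAssumptions {k d m : ℕ} (b : Vec k → Vec k)
    (σ : Vec k → Matrix (Fin k) (Fin d) ℝ)
    (f : Fin m → Vec k → (Fin m → ℝ) → Vec d → ℝ)
    (g : Fin m → Fin m → Vec k → ℝ) (C : ℝ) : Prop :=
  CoreAssumptions b σ f g C ∧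
  (∀ i j, ContDiff ℝ 2 (g i j)) ∧
  (∀ i j x, genL b σ (g i j) x ≤ 0) ∧
  NonFreeLoop g


section Statement7Aux

open Filter

lemma usc_exists_bound' {X : Type*} [TopologicalSpace X] {K : Set X} (hK : IsCompact K)
    {f : X → ℝ} (hf : UpperSemicontinuousOn f K) : ∃ M, ∀ x ∈ K, f x ≤ M := by
  have key : ∀ x ∈ K, ∃ t : Set X, IsOpen t ∧ x ∈ t ∧ ∀ y ∈ t, y ∈ K → f y < f x + 1 := by
    intro x hx
    have h := hf x hx (f x + 1) (lt_add_one _)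
    rw [eventually_nhdsWithin_iff] at h
    rcases eventually_nhds_iff.1 h with ⟨t, ht, hto, hxt⟩
    exact ⟨t, hto, hxt, ht⟩
  choose U hUo hxU hUb using key
  obtain ⟨t, ht⟩ := hK.elim_nhds_subcover' U (fun x hx => (hUo x hx).mem_nhds (hxU x hx))
  obtain ⟨M, hM⟩ := (t.image fun x : K => f x + 1).finite_toSet.bddAbove
  refine ⟨M, fun x hx => ?_⟩
  have hmem := ht hx
  simp only [Set.mem_iUnion] at hmem
  obtain ⟨z, hzt, hxz⟩ := hmem
  have h1 : f x < f ↑z + 1 := hUb z z.2 x hxz hx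
  have h2 : f ↑z + 1 ≤ M := hM (by simpa using Finset.mem_image_of_mem (fun x : K => f ↑x + 1) hzt)
  linarith

lemma eucNorm_nonneg' {n : ℕ} (v : Vec n) : 0 ≤ eucNorm v := Real.sqrt_nonneg _

lemma eucNorm_zero' {n : ℕ} : eucNorm (0 : Vec n) = 0 := by simp [eucNorm]

lemma abs_apply_le_eucNorm {n : ℕ} (v : Vec n) (i : Fin n) : |v i| ≤ eucNorm v := by
  rw [← Real.sqrt_sq_eq_abs]
  exact Real.sqrt_le_sqrt (Finset.single_le_sum (fun j _ => sq_nonneg (v j)) (Finset.mem_univ i))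

lemma eucNorm_continuous {n : ℕ} : Continuous (eucNorm (n := n)) :=
  Real.continuous_sqrt.comp (by fun_prop)

lemma pinorm_le_eucNorm {n : ℕ} (v : Vec n) : ‖v‖ ≤ eucNorm v := by
  refine (pi_norm_le_iff_of_nonneg (eucNorm_nonneg' v)).2 (fun i => ?_)
  simpa using abs_apply_le_eucNorm v i

end Statement7Aux

/-- **Doubling of variables.** Let `u` be u.s.c. and `w` l.s.c. on the
closed Euclidean ball `B̄` of radius `R`, with `u - w` maximized over `B̄` at an interior
point `x̄`, and for each `ε > 0` let `(x_ε, y_ε)` maximize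
`Φ_ε(x,y) = u x - w y - |x-y|²/(2ε)` over `B̄ × B̄`.  Then `|x_ε - y_ε|²/ε` stays bounded
as `ε → 0⁺` and `x_ε - y_ε → 0`; moreover along any sequence `ε_n → 0` for which
`(x_{ε_n}, y_{ε_n})` converges, the two limits coincide, the common limit is a maximizer
of `u - w` on `B̄`, `|x_{ε_n} - y_{ε_n}|²/(2ε_n) → 0`, `u (x_{ε_n}) → u x̂` and
`w (y_{ε_n}) → w x̂`. -/


theorem statement7 {k : ℕ} (R : ℝ) (hR : 0 < R)
    (u w : Vec k → ℝ)
    (husc : UpperSemicontinuousOn u {x : Vec k | eucNorm x ≤ R})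
    (hlsc : LowerSemicontinuousOn w {x : Vec k | eucNorm x ≤ R})
    (xbar : Vec k) (hxbar : eucNorm xbar < R)
    (hmax : ∀ x : Vec k, eucNorm x ≤ R → u x - w x ≤ u xbar - w xbar)
    (xe ye : ℝ → Vec k)
    (hball : ∀ ε : ℝ, 0 < ε → eucNorm (xe ε) ≤ R ∧ eucNorm (ye ε) ≤ R)
    (hopt : ∀ ε : ℝ, 0 < ε → ∀ x y : Vec k, eucNorm x ≤ R → eucNorm y ≤ R →
      u x - w y - eucNorm (x - y) ^ 2 / (2 * ε)
        ≤ u (xe ε) - w (ye ε) - eucNorm (xe ε - ye ε) ^ 2 / (2 * ε)) :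
    (∃ M : ℝ, ∀ᶠ ε in nhdsWithin (0:ℝ) (Set.Ioi 0),
        eucNorm (xe ε - ye ε) ^ 2 / ε ≤ M) ∧
    Tendsto (fun ε => xe ε - ye ε) (nhdsWithin (0:ℝ) (Set.Ioi 0)) (nhds 0) ∧
    ∀ (εn : ℕ → ℝ) (p p' : Vec k), (∀ n, 0 < εn n) → Tendsto εn atTop (nhds 0) →
      Tendsto (fun n => xe (εn n)) atTop (nhds p) →
      Tendsto (fun n => ye (εn n)) atTop (nhds p') →
      p = p' ∧ eucNorm p ≤ R ∧ (∀ x : Vec k, eucNorm x ≤ R → u x - w x ≤ u p - w p) ∧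
      Tendsto (fun n => eucNorm (xe (εn n) - ye (εn n)) ^ 2 / (2 * εn n)) atTop (nhds 0) ∧
      Tendsto (fun n => u (xe (εn n))) atTop (nhds (u p)) ∧
      Tendsto (fun n => w (ye (εn n))) atTop (nhds (w p)) := by
  set K : Set (Vec k) := {x : Vec k | eucNorm x ≤ R} with hKdef
  have hKclosed : IsClosed K := isClosed_le eucNorm_continuous continuous_const
  have hKcomp : IsCompact K := by
    refine (isCompact_closedBall (0 : Vec k) R).of_isClosed_subset hKclosed ?_
    intro x hx
    rw [Metric.mem_closedBall, dist_zero_right]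
    exact (pinorm_le_eucNorm x).trans hx
  obtain ⟨Mu, hMu⟩ := usc_exists_bound' hKcomp husc
  have hlscneg : UpperSemicontinuousOn (fun x => -w x) K := by
    intro x hx c hc
    have hc' : -w x < c := hc
    filter_upwards [hlsc x hx (-c) (by linarith)] with y hy
    show -w y < c
    linarith
  obtain ⟨Mw, hMw⟩ := usc_exists_bound' hKcomp hlscneg
  set A := u xbar - w xbar with hA
  set M := 2 * (Mu + Mw - A) with hM
  have hkey : ∀ ε > (0:ℝ), A + eucNorm (xe ε - ye ε) ^ 2 / (2 * ε) ≤ u (xe ε) - w (ye ε) := by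
    intro ε hε
    have h := hopt ε hε xbar xbar hxbar.le hxbar.le
    have hz : eucNorm (xbar - xbar) = 0 := by rw [sub_self]; exact eucNorm_zero'
    rw [hz] at h
    norm_num at h
    linarith
  have hDle : ∀ ε > (0:ℝ), eucNorm (xe ε - ye ε) ^ 2 / ε ≤ M := by
    intro ε hε
    have h1 := hkey ε hε
    have h2 := hMu _ (hball ε hε).1
    have h3 := hMw _ (hball ε hε).2
    have hle : eucNorm (xe ε - ye ε) ^ 2 / (2 * ε) ≤ Mu + Mw - A := by linarith
    have he : eucNorm (xe ε - ye ε) ^ 2 / ε = 2 * (eucNorm (xe ε - ye ε) ^ 2 / (2 * ε)) := by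
      field_simp
    rw [he, hM]
    linarith
  have hsqle : ∀ ε > (0:ℝ), eucNorm (xe ε - ye ε) ^ 2 ≤ M * ε := by
    intro ε hε
    have h := hDle ε hε
    rw [div_le_iff₀ hε] at h
    linarith
  have hnormle : ∀ ε > (0:ℝ), ‖xe ε - ye ε‖ ≤ Real.sqrt (M * ε) := by
    intro ε hε
    have hMnn : 0 ≤ M := le_trans (by positivity) (hDle 1 one_pos)
    refine (pinorm_le_eucNorm _).trans ?_
    exact (Real.le_sqrt (eucNorm_nonneg' _) (mul_nonneg hMnn hε.le)).2 (hsqle ε hε)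
  refine ⟨⟨M, ?_⟩, ?_, ?_⟩
  · filter_upwards [self_mem_nhdsWithin] with ε hε
    exact hDle ε hε
  · have hsqrt0 : Tendsto (fun ε : ℝ => Real.sqrt (M * ε)) (nhdsWithin 0 (Set.Ioi 0)) (nhds 0) := by
      have h1 : Tendsto (fun ε : ℝ => Real.sqrt (M * ε)) (nhds 0) (nhds (Real.sqrt (M * 0))) :=
        (Real.continuous_sqrt.comp (continuous_const.mul continuous_id)).tendsto 0
      simpa using h1.mono_left nhdsWithin_le_nhds
    refine squeeze_zero_norm' ?_ hsqrt0
    filter_upwards [self_mem_nhdsWithin] with ε hε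
    exact hnormle ε hε
  · intro εn p p' hpos hε0 hx hy
    have hxK : ∀ n, xe (εn n) ∈ K := fun n => (hball _ (hpos n)).1
    have hyK : ∀ n, ye (εn n) ∈ K := fun n => (hball _ (hpos n)).2
    have hsqrtn : Tendsto (fun n => Real.sqrt (M * εn n)) atTop (nhds 0) := by
      have h1 : Tendsto (fun n => M * εn n) atTop (nhds 0) := by
        simpa using hε0.const_mul M
      have h2 := (Real.continuous_sqrt.tendsto 0).comp h1
      simpa [Function.comp_def] using h2
    have hdiff0 : Tendsto (fun n => xe (εn n) - ye (εn n)) atTop (nhds 0) :=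
      squeeze_zero_norm (fun n => hnormle _ (hpos n)) hsqrtn
    have hpp' : p = p' := by
      have h1 : Tendsto (fun n => xe (εn n) - ye (εn n)) atTop (nhds (p - p')) := hx.sub hy
      exact sub_eq_zero.1 (tendsto_nhds_unique h1 hdiff0)
    subst hpp'
    have hpK : p ∈ K := hKclosed.mem_of_tendsto hx (Filter.Eventually.of_forall hxK)
    have hxnK : Tendsto (fun n => xe (εn n)) atTop (nhdsWithin p K) :=
      tendsto_nhdsWithin_iff.2 ⟨hx, Filter.Eventually.of_forall hxK⟩
    have hynK : Tendsto (fun n => ye (εn n)) atTop (nhdsWithin p K) :=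
      tendsto_nhdsWithin_iff.2 ⟨hy, Filter.Eventually.of_forall hyK⟩
    have hu_ev : ∀ c, u p < c → ∀ᶠ n in atTop, u (xe (εn n)) < c :=
      fun c hc => hxnK.eventually (husc p hpK c hc)
    have hw_ev : ∀ c, c < w p → ∀ᶠ n in atTop, c < w (ye (εn n)) :=
      fun c hc => hynK.eventually (hlsc p hpK c hc)
    have hD0 : ∀ n, 0 ≤ eucNorm (xe (εn n) - ye (εn n)) ^ 2 / (2 * εn n) :=
      fun n => div_nonneg (by positivity) (by linarith [hpos n])
    have hAup : A ≤ u p - w p := by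
      refine le_of_forall_pos_le_add (fun η hη => ?_)
      obtain ⟨n, hn1, hn2⟩ :=
        ((hu_ev (u p + η / 2) (by linarith)).and (hw_ev (w p - η / 2) (by linarith))).exists
      have hk := hkey (εn n) (hpos n)
      have hD := hD0 n
      linarith
    have hApw : A = u p - w p := le_antisymm hAup (hmax p hpK)
    have hu_tend : Tendsto (fun n => u (xe (εn n))) atTop (nhds (u p)) := by
      refine Metric.tendsto_nhds.2 (fun η hη => ?_)
      filter_upwards [hu_ev (u p + η) (by linarith), hw_ev (w p - η) (by linarith)] with n h1 h2
      have hk := hkey (εn n) (hpos n)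
      have hD := hD0 n
      rw [Real.dist_eq, abs_lt]
      constructor <;> linarith
    have hw_tend : Tendsto (fun n => w (ye (εn n))) atTop (nhds (w p)) := by
      refine Metric.tendsto_nhds.2 (fun η hη => ?_)
      filter_upwards [hu_ev (u p + η) (by linarith), hw_ev (w p - η) (by linarith)] with n h1 h2
      have hk := hkey (εn n) (hpos n)
      have hD := hD0 n
      rw [Real.dist_eq, abs_lt]
      constructor <;> linarith
    have hdiff_tend : Tendsto (fun n => u (xe (εn n)) - w (ye (εn n)) - A) atTop (nhds 0) := by
      have h1 := (hu_tend.sub hw_tend).sub_const A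
      rw [hApw] at h1 ⊢
      simpa using h1
    have hD_tend : Tendsto (fun n => eucNorm (xe (εn n) - ye (εn n)) ^ 2 / (2 * εn n))
        atTop (nhds 0) := by
      refine squeeze_zero hD0 (fun n => ?_) hdiff_tend
      have hk := hkey (εn n) (hpos n)
      linarith
    exact ⟨rfl, hpK, fun x hxR => (hmax x hxR).trans hApw.le, hD_tend, hu_tend, hw_tend⟩
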